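/- Under the assumptions of the main theorem, for any β > 0, lim_{n→∞} (1/log n) log P(X_{(n)} > a_n n^β) = -αβ; equivalently P(X_{(n)} > a_n n^β) = n^{-αβ + o(1)}. -/

import Mathlib

set_option maxHeartbeats 1000000

open Filter MeasureTheory ProbabilityTheory

theorem stmt_17 {Ω : Type*} [MeasurableSpace Ω] (μ : Measure Ω) [IsProbabilityMeasure μ]
    (X : ℕ → Ω → ℝ) (hX_meas : ∀ i, Measurable (X i))
    (hX_indep : iIndepFun X μ)
    (hX_ident : ∀ i, IdentDistrib (X i) (X 0) μ μ)
    (L : ℝ → ℝ) (α : ℝ) (hα : 0 < α)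
    (hL_pos : ∀ x > (0 : ℝ), 0 < L x)
    (hL_slow : ∀ t > (0 : ℝ), Tendsto (fun x => L (t * x) / L x) atTop (nhds 1))
    (F : ℝ → ℝ) (hF : ∀ x, F x = (μ {ω | X 0 ω ≤ x}).toReal)
    (hFbar : ∀ x > (0 : ℝ), 1 - F x = x ^ (-α) * L x)
    (f : ℝ → ℝ) (hf : ∀ x, HasDerivAt F (f x) x)
    (hf_mono : ∃ x₁ : ℝ, AntitoneOn f (Set.Ici x₁))
    (a : ℕ → ℝ) (ha : ∀ n, a n = sInf {x : ℝ | 1 - 1 / (n : ℝ) ≤ F x}) :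
    ∀ β > (0 : ℝ),
      Tendsto (fun n : ℕ =>
          Real.log (μ {ω | a n * (n : ℝ) ^ β < ⨆ i : Fin n, X i ω}).toReal / Real.log n)
        atTop (nhds (-(α * β))) := by
  intro β hβ
  obtain ⟨x₁, hf_anti⟩ := hf_mono
  set G : ℝ → ℝ := fun x => 1 - F x with hGdef
  clear_value G
  have hF01 : ∀ x, 0 ≤ F x ∧ F x ≤ 1 := by
    intro x
    rw [hF]
    refine ⟨ENNReal.toReal_nonneg, ?_⟩
    have := prob_le_one (μ := μ) (s := {ω | X 0 ω ≤ x})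
    exact ENNReal.toReal_le_of_le_ofReal zero_le_one (by simpa using this)
  have hFmono : Monotone F := by
    intro x y hxy
    rw [hF, hF]
    apply ENNReal.toReal_mono (measure_ne_top μ _)
    apply measure_mono
    intro ω hω
    exact le_trans hω hxy
  have hFcont : Continuous F := by
    rw [continuous_iff_continuousAt]
    exact fun x => (hf x).continuousAt
  have hGanti : Antitone G := by
    intro x y hxy
    rw [hGdef]
    dsimp only
    linarith [hFmono hxy]
  have hFtop : Tendsto F atTop (nhds 1) := by
    have hseq : Tendsto (fun n : ℕ => F n) atTop (nhds 1) := by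
      have hmono : Monotone (fun n : ℕ => {ω | X 0 ω ≤ (n:ℝ)}) := by
        intro m n hmn ω hω
        simp only [Set.mem_setOf_eq] at hω ⊢
        exact le_trans hω (Nat.cast_le.mpr hmn)
      have hun : (⋃ n : ℕ, {ω | X 0 ω ≤ (n:ℝ)}) = Set.univ := by
        ext ω; simp only [Set.mem_iUnion, Set.mem_univ, iff_true, Set.mem_setOf_eq]
        exact exists_nat_ge (X 0 ω)
      have h1 := tendsto_measure_iUnion_atTop (μ := μ) hmono
      rw [hun] at h1
      have h2 : Tendsto (fun n : ℕ => (μ {ω | X 0 ω ≤ (n:ℝ)}).toReal) atTop (nhds (μ (Set.univ : Set Ω)).toReal) :=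
        (ENNReal.tendsto_toReal (measure_ne_top μ _)).comp h1
      simp only [measure_univ, ENNReal.toReal_one] at h2
      convert h2 using 2
      exact hF _
    rw [tendsto_order]
    constructor
    · intro b hb
      obtain ⟨N, hN⟩ := (hseq.eventually (eventually_gt_nhds hb)).exists
      filter_upwards [eventually_ge_atTop (N:ℝ)] with x hx
      exact lt_of_lt_of_le hN (hFmono hx)
    · intro b hb
      filter_upwards with x
      exact lt_of_le_of_lt (hF01 x).2 hb

  have hGpos : ∀ x > (0:ℝ), 0 < G x := by
    intro x hx
    rw [hGdef]; dsimp only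
    rw [hFbar x hx]
    exact mul_pos (Real.rpow_pos_of_pos hx _) (hL_pos x hx)
  have hFlt1 : ∀ x, F x < 1 := by
    intro x
    have h1 : F x ≤ F (max x 1) := hFmono (le_max_left _ _)
    have h2 : 0 < G (max x 1) := hGpos _ (lt_of_lt_of_le one_pos (le_max_right _ _))
    rw [hGdef] at h2; dsimp only at h2
    linarith
  have key : ∀ M : ℝ, ∀ n : ℕ, 1 ≤ n → F M < 1 - 1/(n:ℝ) →
      (M < a n ∧ F (a n) = 1 - 1/(n:ℝ)) := by
    intro M n hn1 hn
    have hn0 : (0:ℝ) < 1/(n:ℝ) := by positivity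
    set S := {x : ℝ | 1 - 1 / (n : ℝ) ≤ F x} with hS
    have hSne : S.Nonempty := by
      obtain ⟨x, hx⟩ := (hFtop.eventually (eventually_ge_nhds (by linarith : 1 - 1/(n:ℝ) < 1))).exists
      exact ⟨x, hx⟩
    have hSsub : ∀ x ∈ S, M < x := by
      intro x hx
      by_contra h
      push_neg at h
      exact absurd (le_trans hx (hFmono h)) (not_le.mpr hn)
    have hSbdd : BddBelow S := ⟨M, fun x hx => le_of_lt (hSsub x hx)⟩
    have hSclosed : IsClosed S := IsClosed.preimage hFcont isClosed_Ici
    have hmem : a n ∈ S := by rw [ha]; exact hSclosed.csInf_mem hSne hSbdd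
    refine ⟨hSsub _ hmem, le_antisymm ?_ hmem⟩
    by_contra h
    push_neg at h
    have hopen : IsOpen {x : ℝ | 1 - 1/(n:ℝ) < F x} := isOpen_lt continuous_const hFcont
    obtain ⟨ε, hε, hball⟩ := Metric.isOpen_iff.mp hopen (a n) h
    have hmem2 : a n - ε/2 ∈ S := by
      have hb : a n - ε/2 ∈ Metric.ball (a n) ε := by
        rw [Metric.mem_ball, Real.dist_eq, show a n - ε/2 - a n = -(ε/2) by ring,
          abs_neg, abs_of_pos (by linarith)]
        linarith
      show (1:ℝ) - 1/(n:ℝ) ≤ F (a n - ε/2)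
      exact le_of_lt (hball hb)
    have : a n ≤ a n - ε/2 := by
      have h2 := csInf_le hSbdd hmem2
      rw [← ha n] at h2; exact h2
    linarith
  have hFa : ∀ᶠ n : ℕ in atTop, F (a n) = 1 - 1/(n:ℝ) := by
    have h0 : ∀ᶠ n : ℕ in atTop, F 0 < 1 - 1/(n:ℝ) := by
      have := hFlt1 0
      have ht : Tendsto (fun n : ℕ => 1 - 1/(n:ℝ)) atTop (nhds 1) := by
        have : Tendsto (fun n : ℕ => 1 / (n:ℝ)) atTop (nhds 0) := tendsto_one_div_atTop_nhds_zero_nat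
        simpa using (tendsto_const_nhds.sub this)
      exact ht.eventually (eventually_gt_nhds this)
    filter_upwards [h0, eventually_ge_atTop 1] with n hn hn1
    exact (key 0 n hn1 hn).2
  have haTop : Tendsto a atTop atTop := by
    rw [tendsto_atTop]
    intro M
    have ht : Tendsto (fun n : ℕ => 1 - 1/(n:ℝ)) atTop (nhds 1) := by
      have : Tendsto (fun n : ℕ => 1 / (n:ℝ)) atTop (nhds 0) := tendsto_one_div_atTop_nhds_zero_nat
      simpa using (tendsto_const_nhds.sub this)
    filter_upwards [ht.eventually (eventually_gt_nhds (hFlt1 M)), eventually_ge_atTop 1]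
      with n hn hn1
    exact le_of_lt (key M n hn1 hn).1
  have hGratio : ∀ t > (0:ℝ), Tendsto (fun y => G (t*y) / G y) atTop (nhds (t ^ (-α))) := by
    intro t ht
    have h1 : Tendsto (fun y => t ^ (-α) * (L (t*y) / L y)) atTop (nhds (t ^ (-α))) := by
      simpa using (hL_slow t ht).const_mul (t ^ (-α))
    apply h1.congr'
    filter_upwards [eventually_gt_atTop (0:ℝ)] with y hy
    have hty : 0 < t * y := mul_pos ht hy
    have hGy : G y = y ^ (-α) * L y := by rw [hGdef]; exact hFbar y hy
    have hGty : G (t*y) = (t*y) ^ (-α) * L (t*y) := by rw [hGdef]; exact hFbar _ hty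
    rw [hGy, hGty, Real.mul_rpow (le_of_lt ht) (le_of_lt hy)]
    have hLy : L y ≠ 0 := ne_of_gt (hL_pos y hy)
    have hyα : y ^ (-α) ≠ 0 := ne_of_gt (Real.rpow_pos_of_pos hy _)
    field_simp
  have hMVT : ∀ t y : ℝ, 1 < t → 0 < y → x₁ ≤ y / t →
      F (t*y) - F y ≤ f y * (t*y - y) ∧ f y * (y - y/t) ≤ F y - F (y/t) := by
    intro t y ht hy hyt
    have ht0 : 0 < t := lt_trans one_pos ht
    have hyty : y / t ≤ y := by
      rw [div_le_iff₀ ht0]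
      nlinarith
    have hy1 : x₁ ≤ y := le_trans hyt hyty
    have hyty' : y ≤ t * y := by nlinarith
    have hFcont : Continuous F := by
      rw [continuous_iff_continuousAt]; exact fun x => (hf x).continuousAt
    constructor
    · -- g x = f y * x - F x monotone on [y, t*y]
      set g : ℝ → ℝ := fun x => f y * x - F x with hg
      have hgd : ∀ x, HasDerivAt g (f y - f x) x := fun x => by
        exact (((hasDerivAt_id x).const_mul (f y)).sub (hf x)).congr_deriv (by simp)
      have hmono : MonotoneOn g (Set.Icc y (t*y)) := by
        apply monotoneOn_of_deriv_nonneg (convex_Icc _ _)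
          (((continuous_const.mul continuous_id).sub hFcont).continuousOn)
          (fun x _ => (hgd x).differentiableAt.differentiableWithinAt)
        intro x hx
        rw [interior_Icc] at hx
        have hle : f x ≤ f y := hf_anti hy1 (le_trans hy1 (le_of_lt hx.1)) (le_of_lt hx.1)
        exact le_of_le_of_eq (by linarith : (0:ℝ) ≤ f y - f x) ((hgd x).deriv).symm
      have := hmono (Set.left_mem_Icc.mpr hyty') (Set.right_mem_Icc.mpr hyty') hyty'
      simp only [hg] at this
      linarith
    · set g : ℝ → ℝ := fun x => F x - f y * x with hg
      have hgd : ∀ x, HasDerivAt g (f x - f y) x := fun x => by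
        exact ((hf x).sub ((hasDerivAt_id x).const_mul (f y))).congr_deriv (by simp)
      have hmono : MonotoneOn g (Set.Icc (y/t) y) := by
        apply monotoneOn_of_deriv_nonneg (convex_Icc _ _)
          ((hFcont.sub (continuous_const.mul continuous_id)).continuousOn)
          (fun x _ => (hgd x).differentiableAt.differentiableWithinAt)
        intro x hx
        rw [interior_Icc] at hx
        have hle : f y ≤ f x := hf_anti (le_trans hyt (le_of_lt hx.1)) hy1 (le_of_lt hx.2)
        exact le_of_le_of_eq (by linarith : (0:ℝ) ≤ f x - f y) ((hgd x).deriv).symm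
      have := hmono (Set.left_mem_Icc.mpr hyty) (Set.right_mem_Icc.mpr hyty) hyty
      simp only [hg] at this
      linarith
  have hlims : Tendsto (fun t : ℝ => (1 - t^(-α))/(t-1)) (nhdsWithin 1 (Set.Ioi 1)) (nhds α) ∧
      Tendsto (fun t : ℝ => t * ((t^α - 1)/(t-1))) (nhdsWithin 1 (Set.Ioi 1)) (nhds α) := by
    have hsub : nhdsWithin (1:ℝ) (Set.Ioi 1) ≤ nhdsWithin 1 {(1:ℝ)}ᶜ :=
      nhdsWithin_mono 1 (fun x hx => ne_of_gt hx)
    have h1 : HasDerivAt (fun x : ℝ => x ^ α) (α * (1:ℝ) ^ (α - 1)) 1 :=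
      Real.hasDerivAt_rpow_const (Or.inl one_ne_zero)
    have h2 : HasDerivAt (fun x : ℝ => x ^ (-α)) (-α * (1:ℝ) ^ (-α - 1)) 1 :=
      Real.hasDerivAt_rpow_const (Or.inl one_ne_zero)
    rw [hasDerivAt_iff_tendsto_slope] at h1 h2
    simp only [Real.one_rpow, mul_one] at h1 h2
    have htid : Tendsto (fun t : ℝ => t) (nhdsWithin 1 (Set.Ioi 1)) (nhds 1) :=
      tendsto_id.mono_left nhdsWithin_le_nhds
    constructor
    · have h3 := (h2.mono_left hsub).neg
      rw [neg_neg] at h3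
      apply h3.congr'
      filter_upwards [self_mem_nhdsWithin] with t ht
      have h1t : t - 1 ≠ 0 := sub_ne_zero.mpr (ne_of_gt ht)
      rw [slope_def_field, Real.one_rpow]
      field_simp
      ring
    · have h3 := htid.mul (h1.mono_left hsub)
      rw [one_mul] at h3
      apply h3.congr'
      filter_upwards [self_mem_nhdsWithin] with t ht
      rw [slope_def_field, Real.one_rpow]
  obtain ⟨hlim1, hlim2⟩ := hlims
  have hbracket : ∀ ε > (0:ℝ), ∀ᶠ y : ℝ in atTop,
      (α - ε) * G y ≤ y * f y ∧ y * f y ≤ (α + ε) * G y := by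
    intro ε hε
    obtain ⟨t, ⟨hlt, hut⟩, ht⟩ :=
      (((hlim1.eventually (eventually_gt_nhds (by linarith : α - ε < α))).and
        (hlim2.eventually (eventually_lt_nhds (by linarith : α < α + ε)))).and
        self_mem_nhdsWithin).exists
    -- ht already 1 < t
    have ht0 : 0 < t := lt_trans one_pos ht
    have ht1 : 0 < t - 1 := by linarith
    -- limits in y for this t
    have hE2 : Tendsto (fun y => (1 - G (t*y)/G y)/(t-1)) atTop (nhds ((1 - t^(-α))/(t-1))) :=
      (tendsto_const_nhds.sub (hGratio t ht0)).div_const _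
    have hs0 : (0:ℝ) < 1/t := by positivity
    have hsval : ((1/t : ℝ)) ^ (-α) = t ^ α := by
      rw [one_div, Real.inv_rpow (le_of_lt ht0), Real.rpow_neg (le_of_lt ht0), inv_inv]
    have hE3 : Tendsto (fun y => (G ((1/t)*y)/G y - 1) * (t/(t-1))) atTop
        (nhds (t * ((t^α - 1)/(t-1)))) := by
      have := ((hGratio (1/t) hs0).sub_const 1).mul_const (t/(t-1))
      rw [hsval] at this
      convert this using 2
      ring
    filter_upwards [eventually_ge_atTop (max x₁ 1 * t),
      hE2.eventually (eventually_gt_nhds hlt),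
      hE3.eventually (eventually_lt_nhds hut)] with y h1 h2 h3
    have hy0 : 0 < y := lt_of_lt_of_le (by positivity : (0:ℝ) < 1 * t)
      (le_trans (by nlinarith [le_max_right x₁ 1] : 1 * t ≤ max x₁ 1 * t) h1)
    have hyt : x₁ ≤ y / t := by
      rw [le_div_iff₀ ht0]
      exact le_trans (by nlinarith [le_max_left x₁ 1] : x₁ * t ≤ max x₁ 1 * t) h1
    obtain ⟨hMVT1, hMVT2⟩ := hMVT t y ht hy0 hyt
    have hGy : 0 < G y := hGpos y hy0
    have hGty : 0 < G (t*y) := hGpos _ (by positivity)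
    have hGyt : 0 < G (y/t) := hGpos _ (by positivity)
    have hFG1 : F (t*y) - F y = G y - G (t*y) := by rw [hGdef]; ring
    have hFG2 : F y - F (y/t) = G (y/t) - G y := by rw [hGdef]; ring
    rw [hFG1] at hMVT1
    rw [hFG2] at hMVT2
    have hst : (1/t)*y = y/t := by ring
    rw [hst] at h3
    constructor
    · -- lower bound
      have k1 : (α - ε) * (t-1) < 1 - G (t*y)/G y := (lt_div_iff₀ ht1).mp h2
      have k2 : G (t*y)/G y * G y = G (t*y) := div_mul_cancel₀ _ (ne_of_gt hGy)
      nlinarith [mul_pos hGy ht1, mul_lt_mul_of_pos_right k1 hGy]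
    · -- upper bound
      have k1 : (G (y/t)/G y - 1) * t < (α + ε) * (t - 1) := by
        have := mul_lt_mul_of_pos_right h3 ht1
        calc (G (y/t)/G y - 1) * t = (G (y/t)/G y - 1) * (t/(t-1)) * (t-1) := by
              field_simp
          _ < (α+ε)*(t-1) := this
      have k2 : G (y/t)/G y * G y = G (y/t) := div_mul_cancel₀ _ (ne_of_gt hGy)
      have k3 : f y * (y - y/t) * t = f y * y * (t - 1) := by field_simp
      nlinarith [mul_lt_mul_of_pos_right k1 hGy, mul_le_mul_of_nonneg_right hMVT2 (le_of_lt ht0)]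
  have hlogcomp : ∀ ε > (0:ℝ), ∃ x₂ : ℝ, 1 ≤ x₂ ∧ ∀ b a' : ℝ, x₂ ≤ a' → a' ≤ b →
      Real.log (G b) ≤ Real.log (G a') - (α - ε) * (Real.log b - Real.log a') ∧
      Real.log (G a') - (α + ε) * (Real.log b - Real.log a') ≤ Real.log (G b) := by
    intro ε hε
    obtain ⟨x₂', hx₂'⟩ := (hbracket ε hε).exists_forall_of_atTop
    refine ⟨max x₂' 1, le_max_right _ _, ?_⟩
    set x₂ := max x₂' 1 with hx₂def
    have hGd : ∀ y, HasDerivAt G (-(f y)) y := fun y => by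
      rw [hGdef]; exact ((hasDerivAt_const y (1:ℝ)).sub (hf y)).congr_deriv (by simp)
    have hkey : ∀ y ∈ Set.Ici x₂, 0 < y ∧ 0 < G y ∧
        (α - ε) * G y ≤ y * f y ∧ y * f y ≤ (α + ε) * G y := by
      intro y hy
      rw [Set.mem_Ici] at hy
      have hy0 : 0 < y := lt_of_lt_of_le one_pos (le_trans (le_max_right _ _) hy)
      exact ⟨hy0, hGpos y hy0, hx₂' y (le_trans (le_max_left _ _) hy)⟩
    -- derivative facts for φ_c := log ∘ G + c * log
    have hder : ∀ c : ℝ, ∀ y ∈ Set.Ici x₂,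
        HasDerivAt (fun y => Real.log (G y) + c * Real.log y) (-(f y)/G y + c * y⁻¹) y := by
      intro c y hy
      obtain ⟨hy0, hGy, -⟩ := hkey y hy
      exact ((hGd y).log (ne_of_gt hGy)).add ((Real.hasDerivAt_log (ne_of_gt hy0)).const_mul c)
    intro b a' ha' hab
    have hmem_a : a' ∈ Set.Ici x₂ := ha'
    have hmem_b : b ∈ Set.Ici x₂ := le_trans ha' hab
    constructor
    · -- φ antitone
      have hanti : AntitoneOn (fun y => Real.log (G y) + (α - ε) * Real.log y) (Set.Ici x₂) := by
        apply antitoneOn_of_deriv_nonpos (convex_Ici _)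
        · intro y hy
          exact ((hder (α - ε) y hy).continuousAt).continuousWithinAt
        · intro y hy
          rw [interior_Ici] at hy
          exact ((hder (α - ε) y (Set.mem_Ici.mpr (le_of_lt hy))).differentiableAt).differentiableWithinAt
        · intro y hy
          rw [interior_Ici] at hy
          have hy' : y ∈ Set.Ici x₂ := Set.mem_Ici.mpr (le_of_lt hy)
          rw [(hder (α - ε) y hy').deriv]
          obtain ⟨hy0, hGy, hbr1, -⟩ := hkey y hy'
          have h2 : (α - ε) / y ≤ f y / G y := by
            rw [div_le_div_iff₀ hy0 hGy]
            linarith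
          rw [← div_eq_mul_inv, neg_div]
          linarith
      have := hanti hmem_a hmem_b hab
      dsimp only at this
      linarith
    · have hmono : MonotoneOn (fun y => Real.log (G y) + (α + ε) * Real.log y) (Set.Ici x₂) := by
        apply monotoneOn_of_deriv_nonneg (convex_Ici _)
        · intro y hy
          exact ((hder (α + ε) y hy).continuousAt).continuousWithinAt
        · intro y hy
          rw [interior_Ici] at hy
          exact ((hder (α + ε) y (Set.mem_Ici.mpr (le_of_lt hy))).differentiableAt).differentiableWithinAt
        · intro y hy
          rw [interior_Ici] at hy
          have hy' : y ∈ Set.Ici x₂ := Set.mem_Ici.mpr (le_of_lt hy)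
          rw [(hder (α + ε) y hy').deriv]
          obtain ⟨hy0, hGy, -, hbr2⟩ := hkey y hy'
          have h2 : f y / G y ≤ (α + ε) / y := by
            rw [div_le_div_iff₀ hGy hy0]
            linarith
          rw [← div_eq_mul_inv, neg_div]
          linarith
      have := hmono hmem_a hmem_b hab
      dsimp only at this
      linarith
  have hprob : ∀ n : ℕ, 1 ≤ n → ∀ t : ℝ,
      (μ {ω | t < ⨆ i : Fin n, X i ω}).toReal = 1 - (F t)^n := by
    intro n hn t
    have hne : Nonempty (Fin n) := Fin.pos_iff_nonempty.mp hn
    have hset : {ω | t < ⨆ i : Fin n, X i ω} = (⋂ i ∈ Finset.range n, X i ⁻¹' Set.Iic t)ᶜ := by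
      ext ω
      simp only [Set.mem_setOf_eq, Set.mem_compl_iff, Set.mem_iInter, Set.mem_preimage,
        Set.mem_Iic, Finset.mem_range, not_forall, not_le]
      constructor
      · intro h
        by_contra h2
        push_neg at h2
        have : (⨆ i : Fin n, X i ω) ≤ t := ciSup_le (fun i => h2 i i.isLt)
        linarith
      · rintro ⟨i, hi, hti⟩
        have := le_ciSup (f := fun j : Fin n => X j ω)
          (Set.Finite.bddAbove (Set.finite_range _)) (⟨i, hi⟩ : Fin n)
        exact lt_of_lt_of_le hti this
    have hmeas : MeasurableSet (⋂ i ∈ Finset.range n, X i ⁻¹' Set.Iic t) :=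
      MeasurableSet.biInter (Finset.range n).countable_toSet
        (fun i _ => (hX_meas i) measurableSet_Iic)
    have hindep := hX_indep.measure_inter_preimage_eq_mul (S := Finset.range n)
      (sets := fun _ => Set.Iic t) (fun i _ => measurableSet_Iic)
    have hid : ∀ i : ℕ, μ (X i ⁻¹' Set.Iic t) = μ (X 0 ⁻¹' Set.Iic t) := by
      intro i
      have h1 := (hX_ident i).map_eq
      rw [← Measure.map_apply (hX_meas i) measurableSet_Iic,
        ← Measure.map_apply (hX_meas 0) measurableSet_Iic, h1]
    rw [hset, measure_compl hmeas (measure_ne_top μ _)]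
    rw [measure_univ]
    rw [hindep]
    have hprod : (∏ i ∈ Finset.range n, μ (X i ⁻¹' Set.Iic t)) = (μ (X 0 ⁻¹' Set.Iic t))^n := by
      rw [Finset.prod_congr rfl (fun i _ => hid i), Finset.prod_const, Finset.card_range]
    rw [hprod]
    have hle : (μ (X 0 ⁻¹' Set.Iic t))^n ≤ 1 := by
      apply pow_le_one' (prob_le_one)
    rw [ENNReal.toReal_sub_of_le hle ENNReal.one_ne_top]
    rw [ENNReal.toReal_pow, ENNReal.toReal_one]
    congr 1
    rw [hF]
    rfl
  have hpow : ∀ n : ℕ, 1 ≤ n → ∀ u : ℝ, 0 < u → (n:ℝ) * u ≤ 1 →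
      (n:ℝ)*u/2 ≤ 1 - (1-u)^n ∧ 1 - (1-u)^n ≤ (n:ℝ)*u := by
    intro n hn u hu0 hu1
    have hn1 : (1:ℝ) ≤ (n:ℝ) := by exact_mod_cast hn
    have hu_le1 : u ≤ 1 := by nlinarith
    constructor
    · have h1 : (1-u)^n ≤ Real.exp (-u)^n := by
        apply pow_le_pow_left₀ (by linarith)
        linarith [Real.add_one_le_exp (-u)]
      have h2 : Real.exp (-u)^n = Real.exp (-((n:ℝ)*u)) := by
        rw [← Real.exp_nat_mul]; ring_nf
      have hpos : (0:ℝ) < 1 + (n:ℝ)*u := by positivity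
      have h3 : Real.exp (-((n:ℝ)*u)) ≤ (1 + (n:ℝ)*u)⁻¹ := by
        rw [Real.exp_neg]
        apply inv_anti₀ hpos
        linarith [Real.add_one_le_exp ((n:ℝ)*u)]
      have hv : (1 + (n:ℝ)*u)⁻¹ * (1 + (n:ℝ)*u) = 1 := inv_mul_cancel₀ (ne_of_gt hpos)
      have hvhalf : (1:ℝ)/2 ≤ (1 + (n:ℝ)*u)⁻¹ := by
        rw [div_le_iff₀ (by norm_num)]
        nlinarith
      have hnu0 : 0 ≤ (n:ℝ)*u := by positivity
      nlinarith [h1, h2 ▸ h3]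
    · have := one_add_mul_le_pow (show (-2:ℝ) ≤ -u by linarith) n
      have heq : (1 + -u)^n = (1-u)^n := by ring_nf
      nlinarith
  rw [Metric.tendsto_nhds]
  intro δ hδ
  set ε := δ/(2*β) with hεdef
  have hε : 0 < ε := by positivity
  have hεβ : ε*β = δ/2 := by rw [hεdef]; field_simp
  obtain ⟨x₂, hx₂1, hcomp⟩ := hlogcomp ε hε
  have hlogtop : Tendsto (fun n : ℕ => Real.log n) atTop atTop :=
    Real.tendsto_log_atTop.comp tendsto_natCast_atTop_atTop
  filter_upwards [hFa, haTop.eventually (eventually_ge_atTop x₂),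
    hlogtop.eventually (eventually_gt_atTop (max (2*Real.log 2/δ) 0)),
    eventually_ge_atTop 1] with n hFan han hlogn2 hn1
  have hn0 : (0:ℝ) < (n:ℝ) := by exact_mod_cast Nat.lt_of_lt_of_le Nat.zero_lt_one hn1
  have hlogn_pos : 0 < Real.log n := lt_of_le_of_lt (le_max_right _ _) hlogn2
  have ha0 : 0 < a n := lt_of_lt_of_le (lt_of_lt_of_le one_pos hx₂1) han
  have hrp : 0 < (n:ℝ)^β := Real.rpow_pos_of_pos hn0 β
  have hrp1 : (1:ℝ) ≤ (n:ℝ)^β := by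
    calc (1:ℝ) = 1 ^ β := (Real.one_rpow β).symm
      _ ≤ (n:ℝ)^β := Real.rpow_le_rpow zero_le_one (by exact_mod_cast hn1) (le_of_lt hβ)
  set b := a n * (n:ℝ)^β with hbdef
  have hb0 : 0 < b := mul_pos ha0 hrp
  have hab : a n ≤ b := le_mul_of_one_le_right (le_of_lt ha0) hrp1
  have hGa_val : G (a n) = 1/(n:ℝ) := by rw [hGdef]; dsimp only; rw [hFan]; ring
  set u := G b with hudef
  have hu0 : 0 < u := hGpos b hb0
  have hu_le : u ≤ 1/(n:ℝ) := hGa_val ▸ hGanti hab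
  have hnu1 : (n:ℝ)*u ≤ 1 := by
    calc (n:ℝ)*u ≤ (n:ℝ)*(1/(n:ℝ)) := by nlinarith
      _ = 1 := by field_simp
  set p := (μ {ω | b < ⨆ i : Fin n, X i ω}).toReal with hpdef
  have hFb : F b = 1 - u := by
    have : u = 1 - F b := by rw [hudef, hGdef]
    linarith
  have hp : p = 1 - (1-u)^n := by
    rw [hpdef, hprob n hn1 b, hFb]
  obtain ⟨hp_lo, hp_hi⟩ := hpow n hn1 u hu0 hnu1
  obtain ⟨hc1, hc2⟩ := hcomp b (a n) han hab
  have hlog_ab : Real.log b - Real.log (a n) = β * Real.log n := by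
    rw [hbdef, Real.log_mul (ne_of_gt ha0) (ne_of_gt hrp), Real.log_rpow hn0]; ring
  have hlog_Ga : Real.log (G (a n)) = -Real.log n := by
    rw [hGa_val, one_div, Real.log_inv]
  rw [hlog_ab, hlog_Ga] at hc1 hc2
  have hp_pos : 0 < p := by
    rw [hp]; nlinarith [mul_pos hn0 hu0]
  have hlogp_hi : Real.log p ≤ Real.log n + Real.log u := by
    have h1 : p ≤ (n:ℝ)*u := by rw [hp]; exact hp_hi
    calc Real.log p ≤ Real.log ((n:ℝ)*u) := Real.log_le_log hp_pos h1
      _ = Real.log n + Real.log u := Real.log_mul (ne_of_gt hn0) (ne_of_gt hu0)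
  have hlogp_lo : Real.log n + Real.log u - Real.log 2 ≤ Real.log p := by
    have h1 : (n:ℝ)*u/2 ≤ p := by rw [hp]; exact hp_lo
    have h2 : Real.log ((n:ℝ)*u/2) ≤ Real.log p := Real.log_le_log (by positivity) h1
    rwa [Real.log_div (ne_of_gt (mul_pos hn0 hu0)) two_ne_zero,
      Real.log_mul (ne_of_gt hn0) (ne_of_gt hu0)] at h2
  have hq_hi : Real.log p / Real.log n ≤ -(α-ε)*β := by
    rw [div_le_iff₀ hlogn_pos]
    have hexp : -(α-ε)*β*Real.log n = -((α-ε)*(β*Real.log n)) := by ring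
    linarith
  have hq_lo : -(α+ε)*β - Real.log 2/Real.log n ≤ Real.log p / Real.log n := by
    rw [le_div_iff₀ hlogn_pos]
    have hexp : (-(α+ε)*β - Real.log 2/Real.log n) * Real.log n
        = -((α+ε)*(β*Real.log n)) - Real.log 2 := by
      field_simp
    linarith
  have hlog2 : Real.log 2 / Real.log n < δ/2 := by
    rw [div_lt_iff₀ hlogn_pos]
    have h1 : 2*Real.log 2/δ < Real.log n := lt_of_le_of_lt (le_max_left _ _) hlogn2
    rw [div_lt_iff₀ hδ] at h1
    linarith
  rw [Real.dist_eq, abs_lt]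
  have hexp1 : -(α-ε)*β = -(α*β) + ε*β := by ring
  have hexp2 : -(α+ε)*β = -(α*β) - ε*β := by ring
  constructor
  · linarith
  · linarith
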